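/- arXiv:0904.3118 — 3 statements merged into one kernel-verified Lean document; each statement's English description precedes it below -/
import Mathlib

section
/- Let n ≥ 2 and let λ be an n-core. If λ has a removable box of residue i, then λ has no addable box of residue i; likewise, if λ has an addable box of residue i, then λ has no removable box of residue i. -/
open scoped BigOperators

namespace FV

/-- The standard inner product on ℝⁿ. -/
def ip (n : ℕ) (v w : Fin n → ℝ) : ℝ := ∑ i, v i * w i

/-- Standard basis vector `e i` (0-indexed; junk `0` if `i ≥ n`). -/
def e (n : ℕ) (i : ℕ) : Fin n → ℝ := fun j => if (j : ℕ) = i then 1 else 0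

/-- The subspace `V` of sum-zero vectors. -/
def V0 (n : ℕ) : Set (Fin n → ℝ) := {v | ∑ i, v i = 0}

/-- Simple root `αᵢ = eᵢ − eᵢ₊₁` (paper 1-indexing: meaningful for 1 ≤ i ≤ n−1). -/
def sroot (n : ℕ) (i : ℕ) : Fin n → ℝ := e n (i - 1) - e n i

/-- The positive roots `eᵢ − eⱼ`, i < j. -/
def PosRoot (n : ℕ) : Set (Fin n → ℝ) := {α | ∃ a b : ℕ, a < b ∧ b < n ∧ α = e n a - e n b}

/-- All roots. -/
def Roots (n : ℕ) : Set (Fin n → ℝ) := PosRoot n ∪ (-PosRoot n)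

/-- The highest root θ = e₁ − eₙ. -/
def theta (n : ℕ) : Fin n → ℝ := e n 0 - e n (n - 1)

/-- Closed half-space H⁺_{α,k} ⊆ V. -/
def Hplus (n : ℕ) (α : Fin n → ℝ) (k : ℝ) : Set (Fin n → ℝ) := {v | v ∈ V0 n ∧ k ≤ ip n v α}

/-- Closed half-space H⁻_{α,k} ⊆ V. -/
def Hminus (n : ℕ) (α : Fin n → ℝ) (k : ℝ) : Set (Fin n → ℝ) := {v | v ∈ V0 n ∧ ip n v α ≤ k}

/-- Affine hyperplane H_{α,k} ⊆ V. -/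
def Hyp (n : ℕ) (α : Fin n → ℝ) (k : ℝ) : Set (Fin n → ℝ) := {v | v ∈ V0 n ∧ ip n v α = k}

/-- The (open) fundamental alcove A₀. -/
def A0 (n : ℕ) : Set (Fin n → ℝ) :=
  {v | v ∈ V0 n ∧ (∀ i : ℕ, 1 ≤ i → i ≤ n - 1 → 0 < ip n v (sroot n i)) ∧ ip n v (theta n) < 1}

/-- The dominant chamber. -/
def Dominant (n : ℕ) : Set (Fin n → ℝ) :=
  {v | v ∈ V0 n ∧ ∀ i : ℕ, 1 ≤ i → i ≤ n - 1 → 0 ≤ ip n v (sroot n i)}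

/-- Coordinate swap, as a permutation of ℝⁿ. -/
def swapPerm (n : ℕ) (a b : Fin n) : Equiv.Perm (Fin n → ℝ) :=
  (Equiv.swap a b).arrowCongr (Equiv.refl ℝ)

/-- The affine reflection s₀ : (a₁,...,aₙ) ↦ (aₙ+1, a₂, ..., a_{n−1}, a₁−1). -/
def s0 (n : ℕ) : Equiv.Perm (Fin n → ℝ) :=
  if h : 2 ≤ n then
    (swapPerm n ⟨0, by omega⟩ ⟨n - 1, by omega⟩).trans (Equiv.addLeft (e n 0 - e n (n - 1)))
  else Equiv.refl _

/-- The generators s₀, s₁, ..., s_{n−1} of the affine symmetric group; for i ≥ 1,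
`gen n i` swaps the (i−1)-st and i-th (0-indexed) coordinates. -/
def gen (n : ℕ) (i : Fin n) : Equiv.Perm (Fin n → ℝ) :=
  if (i : ℕ) = 0 then s0 n
  else swapPerm n ⟨(i : ℕ) - 1, lt_of_le_of_lt (Nat.sub_le _ _) i.isLt⟩ i

/-- The affine symmetric group Ŝₙ, acting on ℝⁿ. -/
def AffS (n : ℕ) : Subgroup (Equiv.Perm (Fin n → ℝ)) := Subgroup.closure (Set.range (gen n))

/-- The finite symmetric group Sₙ ⊆ Ŝₙ, generated by s₁, ..., s_{n−1}. -/
def SymS (n : ℕ) : Subgroup (Equiv.Perm (Fin n → ℝ)) :=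
  Subgroup.closure {g | ∃ i : Fin n, (i : ℕ) ≠ 0 ∧ g = gen n i}

/-- Coxeter length: word length in the generators. -/
noncomputable def len (n : ℕ) (w : Equiv.Perm (Fin n → ℝ)) : ℕ :=
  sInf {k | ∃ l : List (Fin n), l.length = k ∧ (l.map (gen n)).prod = w}

/-- w is a minimal length representative of its left coset wSₙ. -/
def IsMinCosetRep (n : ℕ) (w : Equiv.Perm (Fin n → ℝ)) : Prop :=
  w ∈ AffS n ∧ ∀ u ∈ SymS n, len n w ≤ len n (w * u)

/-- The complement (in V) of the m-Shi arrangement. -/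
def ShiComp (n : ℕ) (m : ℕ) : Set (Fin n → ℝ) :=
  V0 n \ ⋃ (α ∈ PosRoot n), ⋃ (k : ℤ), ⋃ (_ : -(m : ℤ) < k ∧ k ≤ (m : ℤ)), Hyp n α (k : ℝ)

/-- The alcoves wA₀ and w'A₀ lie in the same region (connected component) of the
complement of the m-Shi arrangement. -/
def SameRegion (n m : ℕ) (w w' : Equiv.Perm (Fin n → ℝ)) : Prop :=
  ∃ v ∈ ⇑w '' A0 n, ∃ v' ∈ ⇑w' '' A0 n, v' ∈ connectedComponentIn (ShiComp n m) v

/-- The alcove wA₀ is m-minimal. -/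
def MMinimal (n m : ℕ) (w : Equiv.Perm (Fin n → ℝ)) : Prop :=
  ∀ w' ∈ AffS n, SameRegion n m w w' → len n w ≤ len n w'

/-- `w(α + kδ) = β + lδ`: the affine-linear function v ↦ ⟨v,α⟩ + k, pulled back
along w⁻¹, equals v ↦ ⟨v,β⟩ + l on V. -/
def AffMapsTo (n : ℕ) (w : Equiv.Perm (Fin n → ℝ)) (α : Fin n → ℝ) (k : ℤ)
    (β : Fin n → ℝ) (l : ℤ) : Prop :=
  ∀ v ∈ V0 n, ip n (w⁻¹ v) α + (k : ℝ) = ip n v β + (l : ℝ)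

/-- α + kδ is a positive affine root. -/
def PosAff (n : ℕ) (α : Fin n → ℝ) (k : ℤ) : Prop :=
  α ∈ Roots n ∧ (0 < k ∨ (k = 0 ∧ α ∈ PosRoot n))

/-- α + kδ is a negative affine root. -/
def NegAff (n : ℕ) (α : Fin n → ℝ) (k : ℤ) : Prop :=
  α ∈ Roots n ∧ (k < 0 ∨ (k = 0 ∧ -α ∈ PosRoot n))

/-- α + kδ ∈ Inv(w). -/
def InInv (n : ℕ) (w : Equiv.Perm (Fin n → ℝ)) (α : Fin n → ℝ) (k : ℤ) : Prop :=
  PosAff n α k ∧ ∃ β : Fin n → ℝ, ∃ l : ℤ, NegAff n β l ∧ AffMapsTo n w α k β l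

/-- The simple affine root αᵢ, as a pair (finite root, δ-coefficient); α₀ = δ − θ. -/
def sAff (n : ℕ) (i : Fin n) : (Fin n → ℝ) × ℤ :=
  if (i : ℕ) = 0 then (-(theta n), 1) else (sroot n (i : ℕ), 0)

/-- Hook length of the (0-indexed) box (i,j):
1 + #boxes strictly to the right + #boxes strictly below. -/
def hook (lam : YoungDiagram) (i j : ℕ) : ℕ :=
  (lam.rowLen i - (j + 1)) + (lam.colLen j - (i + 1)) + 1

/-- λ is an s-core: no hook length is divisible by s. -/
def IsCore (s : ℕ) (lam : YoungDiagram) : Prop := ∀ c ∈ lam.cells, ¬ (s ∣ hook lam c.1 c.2)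

/-- A removable box of λ: a box of λ of hook length 1. -/
def Removable (lam : YoungDiagram) (c : ℕ × ℕ) : Prop := c ∈ lam ∧ hook lam c.1 c.2 = 1

/-- An addable box of λ: a box outside λ whose adjunction gives a partition. -/
def Addable (lam : YoungDiagram) (c : ℕ × ℕ) : Prop :=
  c ∉ lam ∧ ∃ mu : YoungDiagram, (mu.cells : Set (ℕ × ℕ)) = insert c (lam.cells : Set (ℕ × ℕ))

/-- The residue (j − i) mod n of a box. -/
def res (n : ℕ) (c : ℕ × ℕ) : ZMod n := (c.2 : ZMod n) - (c.1 : ZMod n)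

/-- A removable box of residue r. -/
def RemovableRes (n : ℕ) (r : ZMod n) (lam : YoungDiagram) (c : ℕ × ℕ) : Prop :=
  Removable lam c ∧ res n c = r

/-- An addable box of residue r. -/
def AddableRes (n : ℕ) (r : ZMod n) (lam : YoungDiagram) (c : ℕ × ℕ) : Prop :=
  Addable lam c ∧ res n c = r

open scoped Classical in
/-- The cell set of sᵣλ: adjoin all addable r-boxes if there are any, else delete all
removable r-boxes if there are any, else λ itself. -/
noncomputable def sActSet (n : ℕ) (r : ZMod n) (lam : YoungDiagram) : Set (ℕ × ℕ) :=
  if ∃ c, AddableRes n r lam c then (lam.cells : Set (ℕ × ℕ)) ∪ {c | AddableRes n r lam c}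
  else if ∃ c, RemovableRes n r lam c then
    (lam.cells : Set (ℕ × ℕ)) \ {c | RemovableRes n r lam c}
  else (lam.cells : Set (ℕ × ℕ))

open scoped Classical in
/-- sᵣλ as a Young diagram (junk value λ if the resulting cell set is not a diagram). -/
noncomputable def sFun (n : ℕ) (r : ZMod n) (lam : YoungDiagram) : YoungDiagram :=
  if h : ∃ mu : YoungDiagram, (mu.cells : Set (ℕ × ℕ)) = sActSet n r lam then h.choose else lam

/-- The partition s_{i₁}(s_{i₂}(⋯ s_{i_k}(∅))) for a word l = [i₁, ..., i_k]. -/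
noncomputable def wordAct (n : ℕ) (l : List (Fin n)) : YoungDiagram :=
  l.foldr (fun i mu => sFun n ((i : ℕ) : ZMod n) mu) ⊥

/-- `w∅ = λ`: some word for w sends the empty partition to λ. -/
def ActsToCore (n : ℕ) (w : Equiv.Perm (Fin n → ℝ)) (lam : YoungDiagram) : Prop :=
  ∃ l : List (Fin n), (l.map (gen n)).prod = w ∧ wordAct n l = lam

/-- The bead positions of the abacus of λ: first-column hook lengths and all
negative integers. -/
def beads (lam : YoungDiagram) : Set ℤ :=
  {z | z < 0 ∨ ∃ k : ℕ, (k, 0) ∈ lam ∧ z = (hook lam k 0 : ℤ)}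

/-- The largest level of runner c containing a bead (entry rn + c is at level r). -/
noncomputable def maxLevel (n : ℕ) (B : Set ℤ) (c : ℕ) : ℤ :=
  sSup {r : ℤ | r * (n : ℤ) + (c : ℤ) ∈ B}

/-- The balance number of an abacus. -/
noncomputable def balance (n : ℕ) (B : Set ℤ) : ℤ := ∑ c ∈ Finset.range n, maxLevel n B c

/-- Shift all abacus entries by d. -/
def shiftSet (d : ℤ) (B : Set ℤ) : Set ℤ := {z | z - d ∈ B}

/-- The vector n⃗(λ): largest bead levels of the runners of the balanced abacus of λ. -/
noncomputable def nvec (n : ℕ) (lam : YoungDiagram) : Fin n → ℤ :=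
  fun i => maxLevel n (shiftSet (-(balance n (beads lam))) (beads lam)) (i : ℕ)

/-- n⃗(λ) as a real vector. -/
noncomputable def nvecR (n : ℕ) (lam : YoungDiagram) : Fin n → ℝ :=
  fun i => ((nvec n lam i : ℤ) : ℝ)

/-- The root lattice Q ⊆ V: integer vectors with sum zero. -/
def QSet (n : ℕ) : Set (Fin n → ℝ) := {v | (∀ i, ∃ z : ℤ, v i = (z : ℝ)) ∧ v ∈ V0 n}

/-- The region 𝔄_m. -/
def Amreg (n m : ℕ) : Set (Fin n → ℝ) :=
  {v | v ∈ V0 n ∧ (∀ i : ℕ, 1 ≤ i → i ≤ n - 1 → -(m : ℝ) ≤ ip n v (sroot n i)) ∧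
    ip n v (theta n) ≤ (m : ℝ) + 1}

/-- The dominant regions of the m-Shi arrangement. -/
def DomRegions (n m : ℕ) : Set (Set (Fin n → ℝ)) :=
  {R | (∃ v ∈ ShiComp n m, R = connectedComponentIn (ShiComp n m) v) ∧ R ⊆ Dominant n}

/-- The m-minimal alcoves lying in the dominant chamber. -/
def MinDomAlcoves (n m : ℕ) : Set (Set (Fin n → ℝ)) :=
  {A | ∃ w ∈ AffS n, A = ⇑w '' A0 n ∧ MMinimal n m w ∧ A ⊆ Dominant n}

/-- The m-minimal alcoves. -/
def MinAlcoves (n m : ℕ) : Set (Set (Fin n → ℝ)) :=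
  {A | ∃ w ∈ AffS n, A = ⇑w '' A0 n ∧ MMinimal n m w}

/-- The alcoves contained in the region 𝔄_m. -/
def AmAlcoves (n m : ℕ) : Set (Set (Fin n → ℝ)) :=
  {A | ∃ w ∈ AffS n, A = ⇑w '' A0 n ∧ A ⊆ Amreg n m}


lemma addable_rowLen {lam : YoungDiagram} {c d : ℕ} (h : Addable lam (c, d)) :
    lam.rowLen c = d := by
  obtain ⟨hnot, mu, hmu⟩ := h
  have hmem : ∀ x : ℕ × ℕ, x ∈ mu ↔ x = (c, d) ∨ x ∈ lam := by
    intro x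
    have := Set.ext_iff.mp hmu x
    simpa [YoungDiagram.mem_cells, Set.mem_insert_iff] using this
  have hle : lam.rowLen c ≤ d := by
    by_contra hlt
    exact hnot (YoungDiagram.mem_iff_lt_rowLen.mpr (Nat.lt_of_not_le hlt))
  rcases Nat.eq_zero_or_pos d with hd | hd
  · omega
  · have hcd : (c, d) ∈ mu := (hmem _).mpr (Or.inl rfl)
    have h1 : (c, d - 1) ∈ mu := mu.up_left_mem le_rfl (Nat.sub_le _ _) hcd
    have h2 : (c, d - 1) ∈ lam := by
      rcases (hmem _).mp h1 with h | h
      · exfalso; have := congrArg Prod.snd h; simp at this; omega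
      · exact h
    have := YoungDiagram.mem_iff_lt_rowLen.mp h2
    omega

lemma addable_colLen {lam : YoungDiagram} {c d : ℕ} (h : Addable lam (c, d)) :
    lam.colLen d = c := by
  obtain ⟨hnot, mu, hmu⟩ := h
  have hmem : ∀ x : ℕ × ℕ, x ∈ mu ↔ x = (c, d) ∨ x ∈ lam := by
    intro x
    have := Set.ext_iff.mp hmu x
    simpa [YoungDiagram.mem_cells, Set.mem_insert_iff] using this
  have hle : lam.colLen d ≤ c := by
    by_contra hlt
    exact hnot (YoungDiagram.mem_iff_lt_colLen.mpr (Nat.lt_of_not_le hlt))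
  rcases Nat.eq_zero_or_pos c with hc | hc
  · omega
  · have hcd : (c, d) ∈ mu := (hmem _).mpr (Or.inl rfl)
    have h1 : (c - 1, d) ∈ mu := mu.up_left_mem (Nat.sub_le _ _) le_rfl hcd
    have h2 : (c - 1, d) ∈ lam := by
      rcases (hmem _).mp h1 with h | h
      · exfalso; have := congrArg Prod.fst h; simp at this; omega
      · exact h
    have := YoungDiagram.mem_iff_lt_colLen.mp h2
    omega

lemma key (n : ℕ) (hn : 2 ≤ n) (lam : YoungDiagram) (hcore : IsCore n lam)
    {r : ZMod n} {p q : ℕ × ℕ} (hrem : RemovableRes n r lam p)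
    (hadd : AddableRes n r lam q) : False := by
  obtain ⟨a, b⟩ := p
  obtain ⟨c, d⟩ := q
  obtain ⟨⟨hmem, hhook⟩, hres1⟩ := hrem
  obtain ⟨hA, hres2⟩ := hadd
  dsimp only at hhook
  have hrow : lam.rowLen a = b + 1 := by
    have h1 := YoungDiagram.mem_iff_lt_rowLen.mp hmem
    unfold hook at hhook; omega
  have hcol : lam.colLen b = a + 1 := by
    have h1 := YoungDiagram.mem_iff_lt_colLen.mp hmem
    unfold hook at hhook; omega
  have hrowc : lam.rowLen c = d := addable_rowLen hA
  have hcolc : lam.colLen d = c := addable_colLen hA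
  have hresEq : (b : ZMod n) - a = (d : ZMod n) - c := by
    rw [← hres2] at hres1; exact hres1
  have hdvd : ∀ m : ℕ, ((m : ZMod n) = 0) → n ∣ m := fun m hm => by
    haveI : NeZero n := ⟨by omega⟩
    exact (ZMod.natCast_eq_zero_iff m n).mp hm
  rcases lt_trichotomy a c with hac | hac | hac
  · -- removable above addable: box (a, d)
    have hbox : (a, d) ∈ lam := YoungDiagram.mem_iff_lt_colLen.mpr (by omega)
    have hdb : d ≤ b := by
      have := YoungDiagram.mem_iff_lt_rowLen.mp hbox; omega
    apply hcore (a, d) ((lam.mem_cells _).mpr hbox)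
    apply hdvd
    have hval : hook lam a d = (b + c) - (d + a) := by unfold hook; omega
    rw [hval, Nat.cast_sub (by omega : d + a ≤ b + c)]
    push_cast
    linear_combination hresEq
  · -- same row: d = b + 1, residues differ by 1
    subst hac
    have : d = b + 1 := by omega
    subst this
    have h1 : (1 : ZMod n) = 0 := by push_cast at hresEq; linear_combination -hresEq
    have := Nat.le_of_dvd one_pos (hdvd 1 (by rw [Nat.cast_one]; exact h1))
    omega
  · -- addable above removable: box (c, b)
    have hbd : b + 1 ≤ d := by
      have := lam.rowLen_anti c a (le_of_lt hac); omega
    have hbox : (c, b) ∈ lam := YoungDiagram.mem_iff_lt_rowLen.mpr (by omega)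
    apply hcore (c, b) ((lam.mem_cells _).mpr hbox)
    apply hdvd
    have hval : hook lam c b = (d + a) - (b + c) := by unfold hook; omega
    rw [hval, Nat.cast_sub (by omega : b + c ≤ d + a)]
    push_cast
    linear_combination -hresEq


/-- An n-core with a removable i-box has no addable i-box, and
vice versa. -/
theorem statement5 (n : ℕ) (hn : 2 ≤ n) (lam : YoungDiagram) (hcore : IsCore n lam)
    (r : ZMod n) :
    ((∃ c, RemovableRes n r lam c) → ∀ c, ¬ AddableRes n r lam c) ∧
    ((∃ c, AddableRes n r lam c) → ∀ c, ¬ RemovableRes n r lam c) := by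
  constructor
  · rintro ⟨p, hp⟩ c hc; exact key n hn lam hcore hp hc
  · rintro ⟨p, hp⟩ c hc; exact key n hn lam hcore hc hp

end FV
end

section
/- Let n ≥ 2, let λ be an n-core, and let i ∈ ℤ/nℤ. Define sᵢλ to be λ together with all addable i-boxes if λ has at least one addable i-box, λ with all removable i-boxes deleted if λ has at least one removable i-box, and λ otherwise. Then sᵢλ is again an n-core. -/
open scoped BigOperators

namespace FV

/-! ### Auxiliary development: beta-numbers (abacus) for Young diagrams -/

section BetaNumbers

/-- The beta-number of row `i`: `λᵢ - i`. -/
def bet (lam : YoungDiagram) (i : ℕ) : ℤ := (lam.rowLen i : ℤ) - i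

/-- The beta-set of a Young diagram. -/
def Bset (lam : YoungDiagram) : Set ℤ := Set.range (bet lam)

lemma bet_def (lam : YoungDiagram) (i : ℕ) : bet lam i = (lam.rowLen i : ℤ) - i := rfl

lemma bet_mem (lam : YoungDiagram) (i : ℕ) : bet lam i ∈ Bset lam := ⟨i, rfl⟩

lemma bet_le_of_le (lam : YoungDiagram) {i k : ℕ} (h : i ≤ k) :
    bet lam k ≤ bet lam i - ((k : ℤ) - i) := by
  have := lam.rowLen_anti i k h
  rw [bet_def, bet_def]
  omega

lemma rowLen_eq_zero' (lam : YoungDiagram) {i : ℕ} (h : lam.colLen 0 ≤ i) :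
    lam.rowLen i = 0 := by
  by_contra hc
  have h1 : (i, 0) ∈ lam := YoungDiagram.mem_iff_lt_rowLen.mpr (by omega)
  have h2 := YoungDiagram.mem_iff_lt_colLen.mp h1
  omega

lemma corner_not_mem (lam : YoungDiagram) (j : ℕ) :
    ((j : ℤ) + 1 - lam.colLen j) ∉ Bset lam := by
  rintro ⟨k, hk⟩
  rw [bet_def] at hk
  by_cases hkc : k < lam.colLen j
  · have h1 : (k, j) ∈ lam := YoungDiagram.mem_iff_lt_colLen.mpr hkc
    have h2 : j < lam.rowLen k := YoungDiagram.mem_iff_lt_rowLen.mp h1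
    omega
  · have h2 : lam.rowLen k ≤ j := by
      by_contra h
      exact hkc (YoungDiagram.mem_iff_lt_colLen.mp
        (YoungDiagram.mem_iff_lt_rowLen.mpr (by omega)))
    omega

lemma hook_cast (lam : YoungDiagram) {i j : ℕ} (h : (i, j) ∈ lam) :
    (hook lam i j : ℤ) = bet lam i - ((j : ℤ) + 1 - lam.colLen j) := by
  have h1 : j < lam.rowLen i := YoungDiagram.mem_iff_lt_rowLen.mp h
  have h2 : i < lam.colLen j := YoungDiagram.mem_iff_lt_colLen.mp h
  rw [hook, bet_def]
  omega

lemma hook_pos (lam : YoungDiagram) (i j : ℕ) : 1 ≤ hook lam i j := by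
  rw [hook]; omega

lemma closed_iter {n : ℕ} {lam : YoungDiagram}
    (hcl : ∀ z ∈ Bset lam, z - n ∈ Bset lam) :
    ∀ k : ℕ, ∀ z ∈ Bset lam, z - (k : ℤ) * n ∈ Bset lam := by
  intro k
  induction k with
  | zero => intro z hz; simpa using hz
  | succ k ih =>
    intro z hz
    have h1 := hcl _ (ih z hz)
    have h2 : z - ((k : ℤ) + 1) * n = z - (k : ℤ) * n - n := by ring
    push_cast
    rw [h2]
    exact h1

lemma isCore_of_closed {n : ℕ} {lam : YoungDiagram}
    (hcl : ∀ z ∈ Bset lam, z - n ∈ Bset lam) : IsCore n lam := by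
  rintro ⟨i, j⟩ hc hdvd
  rw [YoungDiagram.mem_cells] at hc
  change n ∣ hook lam i j at hdvd
  obtain ⟨k, hk⟩ := hdvd
  have hpos := hook_pos lam i j
  have hk1 : k ≠ 0 := by rintro rfl; simp at hk; omega
  have h2 := closed_iter hcl k _ (bet_mem lam i)
  have h3 := hook_cast lam hc
  apply corner_not_mem lam j
  have h4 : ((j : ℤ) + 1 - lam.colLen j) = bet lam i - (k : ℤ) * n := by
    have h5 : (hook lam i j : ℤ) = (n : ℤ) * k := by exact_mod_cast congrArg (Nat.cast : ℕ → ℤ) hk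
    have h6 : (k : ℤ) * n = (hook lam i j : ℤ) := by rw [h5]; ring
    rw [h6]
    omega
  rw [h4]
  exact h2

lemma closed_of_isCore {n : ℕ} {lam : YoungDiagram} (hcore : IsCore n lam) :
    ∀ z ∈ Bset lam, z - n ∈ Bset lam := by
  classical
  rintro z ⟨i, rfl⟩
  by_contra hx
  set x : ℤ := bet lam i - n with hxdef
  have hex : ∃ k : ℕ, bet lam k ≤ x := by
    refine ⟨lam.rowLen 0 + x.natAbs + i + n, ?_⟩
    have h := bet_le_of_le lam (Nat.zero_le (lam.rowLen 0 + x.natAbs + i + n))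
    have h0 : bet lam 0 = (lam.rowLen 0 : ℤ) := by rw [bet_def]; simp
    omega
  set m := Nat.find hex with hmdef
  have hm : bet lam m ≤ x := Nat.find_spec hex
  have hlt : ∀ k, k < m → x < bet lam k := by
    intro k hk
    have := Nat.find_min hex hk
    omega
  have hmx : bet lam m < x := by
    rcases lt_or_eq_of_le hm with h | h
    · exact h
    · exact absurd ⟨m, h⟩ hx
  have hj0 : 0 ≤ x + m - 1 := by
    by_cases hx0 : 1 ≤ x
    · omega
    · have hkb : x < bet lam (-x).toNat := by
        have h2 : ((-x).toNat : ℤ) = -x := Int.toNat_of_nonneg (by omega)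
        have h3 : -(((-x).toNat : ℤ)) ≤ bet lam (-x).toNat := by
          rw [bet_def]; omega
        have h4 : bet lam (-x).toNat ≠ x := fun h => hx ⟨_, h⟩
        omega
      have h5 : (-x).toNat < m := by
        by_contra h
        push_neg at h
        have := bet_le_of_le lam h
        omega
      omega
  set j : ℕ := (x + m - 1).toNat with hjdef
  have hjx : (j : ℤ) = x + m - 1 := Int.toNat_of_nonneg hj0
  have hcol : ∀ k : ℕ, (k, j) ∈ lam ↔ k < m := by
    intro k
    rw [YoungDiagram.mem_iff_lt_rowLen]
    have hbk : bet lam k = (lam.rowLen k : ℤ) - k := rfl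
    constructor
    · intro h
      by_contra hkm
      push_neg at hkm
      have h6 := bet_le_of_le lam hkm
      omega
    · intro hk
      have h1 : x < bet lam (m - 1) := hlt (m - 1) (by omega)
      have h2 := bet_le_of_le lam (show k ≤ m - 1 by omega)
      omega
  have hcolj : lam.colLen j = m := by
    have h1 : ∀ k, k < lam.colLen j ↔ k < m := fun k =>
      (YoungDiagram.mem_iff_lt_colLen.symm).trans (hcol k)
    have h2 := h1 m
    have h3 := h1 (lam.colLen j)
    omega
  have hmi : m ≤ i + n := by
    by_contra h
    push_neg at h
    have h1 := hlt (i + n) h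
    have h2 := bet_le_of_le lam (show i ≤ i + n by omega)
    omega
  have hcell : (i, j) ∈ lam := by
    rw [YoungDiagram.mem_iff_lt_rowLen]
    have hbi : bet lam i = (lam.rowLen i : ℤ) - i := rfl
    omega
  have hhook := hook_cast lam hcell
  have hn : hook lam i j = n := by
    have h1 : (hook lam i j : ℤ) = (n : ℤ) := by rw [hhook, hcolj]; omega
    exact_mod_cast h1
  exact hcore (i, j) ((YoungDiagram.mem_cells _).mpr hcell) (hn ▸ dvd_refl n)

end BetaNumbers

section OfRows

/-- Build a Young diagram from a weakly decreasing, eventually-zero row length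
function. -/
def ofRows (ρ : ℕ → ℕ) (hρ : ∀ i, ρ (i + 1) ≤ ρ i) (N : ℕ) (hN : ∀ i, N ≤ i → ρ i = 0) :
    YoungDiagram where
  cells := (Finset.range N ×ˢ Finset.range (ρ 0 + 1)).filter fun c => c.2 < ρ c.1
  isLowerSet := by
    have hanti : ∀ a b : ℕ, a ≤ b → ρ b ≤ ρ a := fun a b h =>
      antitone_nat_of_succ_le hρ h
    intro p q hle hp
    simp only [Finset.coe_filter, Set.mem_setOf_eq, Finset.mem_product,
      Finset.mem_range] at hp ⊢
    obtain ⟨⟨hp1, hp2⟩, hp3⟩ := hp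
    have h1 : q.1 ≤ p.1 := hle.1
    have h2 : q.2 ≤ p.2 := hle.2
    have h3 : ρ p.1 ≤ ρ q.1 := hanti _ _ h1
    have h4 : ρ q.1 ≤ ρ 0 := hanti 0 _ (Nat.zero_le _)
    refine ⟨⟨?_, by omega⟩, by omega⟩
    by_contra h
    push_neg at h
    have := hN _ h
    omega

lemma mem_ofRows {ρ : ℕ → ℕ} {hρ : ∀ i, ρ (i + 1) ≤ ρ i} {N : ℕ}
    {hN : ∀ i, N ≤ i → ρ i = 0} {i j : ℕ} :
    (i, j) ∈ ofRows ρ hρ N hN ↔ j < ρ i := by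
  have hanti : ∀ a b : ℕ, a ≤ b → ρ b ≤ ρ a := fun a b h =>
    antitone_nat_of_succ_le hρ h
  show (i, j) ∈ ((Finset.range N ×ˢ Finset.range (ρ 0 + 1)).filter fun c => c.2 < ρ c.1) ↔ _
  rw [Finset.mem_filter, Finset.mem_product,
    Finset.mem_range, Finset.mem_range]
  constructor
  · rintro ⟨_, h⟩; exact h
  · intro h
    refine ⟨⟨?_, ?_⟩, h⟩
    · by_contra hc
      push_neg at hc
      rw [hN i hc] at h
      omega
    · have := hanti 0 i (Nat.zero_le _)
      omega

lemma rowLen_ofRows {ρ : ℕ → ℕ} {hρ : ∀ i, ρ (i + 1) ≤ ρ i} {N : ℕ}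
    {hN : ∀ i, N ≤ i → ρ i = 0} (i : ℕ) :
    (ofRows ρ hρ N hN).rowLen i = ρ i := by
  have h1 : ∀ j : ℕ, j < (ofRows ρ hρ N hN).rowLen i ↔ j < ρ i := fun j =>
    (YoungDiagram.mem_iff_lt_rowLen.symm).trans mem_ofRows
  have h2 := h1 (ρ i)
  have h3 := h1 ((ofRows ρ hρ N hN).rowLen i)
  omega

end OfRows

section AddRemove

/-- Beta-numbers at which an addable box of residue `r` sits. -/
def Sadd (n : ℕ) (r : ZMod n) (lam : YoungDiagram) : Set ℤ :=
  {z | z ∈ Bset lam ∧ ((z : ZMod n) = r) ∧ z + 1 ∉ Bset lam}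

/-- Beta-numbers at which a removable box of residue `r` sits. -/
def Trem (n : ℕ) (r : ZMod n) (lam : YoungDiagram) : Set ℤ :=
  {z | z ∈ Bset lam ∧ ((z : ZMod n) = r + 1) ∧ z - 1 ∉ Bset lam}

lemma succ_not_mem_iff (lam : YoungDiagram) (i : ℕ) :
    bet lam i + 1 ∉ Bset lam ↔ (i = 0 ∨ lam.rowLen i < lam.rowLen (i - 1)) := by
  constructor
  · intro h
    by_contra hc
    push_neg at hc
    obtain ⟨h1, h2⟩ := hc
    apply h
    refine ⟨i - 1, ?_⟩
    have h3 := lam.rowLen_anti (i - 1) i (by omega)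
    rw [bet_def, bet_def]
    omega
  · rintro h ⟨k, hk⟩
    rcases Nat.lt_or_ge k i with hki | hki
    · rcases h with rfl | h
      · omega
      · have h2 := bet_le_of_le lam (show k ≤ i - 1 by omega)
        have h3 : bet lam (i - 1) = (lam.rowLen (i - 1) : ℤ) - (i - 1 : ℕ) := rfl
        have h4 : bet lam i = (lam.rowLen i : ℤ) - i := rfl
        omega
    · have h2 := bet_le_of_le lam hki
      omega

lemma pred_not_mem_iff (lam : YoungDiagram) (i : ℕ) :
    bet lam i - 1 ∉ Bset lam ↔ lam.rowLen (i + 1) < lam.rowLen i := by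
  constructor
  · intro h
    by_contra hc
    push_neg at hc
    have h3 := lam.rowLen_anti i (i + 1) (by omega)
    apply h
    refine ⟨i + 1, ?_⟩
    rw [bet_def, bet_def]
    omega
  · rintro h ⟨k, hk⟩
    rcases Nat.lt_or_ge i k with hki | hki
    · have h2 := bet_le_of_le lam (show i + 1 ≤ k by omega)
      have h3 : bet lam (i + 1) = (lam.rowLen (i + 1) : ℤ) - (i + 1 : ℕ) := rfl
      have h4 : bet lam i = (lam.rowLen i : ℤ) - i := rfl
      omega
    · have h2 := bet_le_of_le lam hki
      omega

lemma res_eq' (n : ℕ) (i j : ℕ) : res n (i, j) = ((((j : ℤ) - (i : ℤ)) : ℤ) : ZMod n) := by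
  simp only [res]
  push_cast
  ring

lemma addable_iff (lam : YoungDiagram) (i j : ℕ) :
    Addable lam (i, j) ↔
      (j = lam.rowLen i ∧ (i = 0 ∨ lam.rowLen i < lam.rowLen (i - 1))) := by
  constructor
  · rintro ⟨hnot, nu, hcells⟩
    have hmem : ∀ c : ℕ × ℕ, c ∈ nu ↔ c = (i, j) ∨ c ∈ lam := by
      intro c
      have h := Set.ext_iff.mp hcells c
      simpa [YoungDiagram.mem_cells, Set.mem_insert_iff] using h
    have hin : (i, j) ∈ nu := (hmem (i, j)).mpr (Or.inl rfl)
    have hj : lam.rowLen i ≤ j := by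
      by_contra h
      push_neg at h
      exact hnot (YoungDiagram.mem_iff_lt_rowLen.mpr h)
    have hje : j = lam.rowLen i := by
      have h1 : (i, lam.rowLen i) ∈ nu := nu.up_left_mem le_rfl hj hin
      rcases (hmem _).mp h1 with h2 | h2
      · have h3 := congrArg Prod.snd h2
        simp only [] at h3
        omega
      · exact absurd (YoungDiagram.mem_iff_lt_rowLen.mp h2) (by omega)
    refine ⟨hje, ?_⟩
    by_cases hi : i = 0
    · exact Or.inl hi
    · right
      have h1 : (i - 1, j) ∈ nu := nu.up_left_mem (by omega) le_rfl hin
      rcases (hmem _).mp h1 with h2 | h2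
      · exact absurd (congrArg Prod.fst h2) (by simp; omega)
      · have := YoungDiagram.mem_iff_lt_rowLen.mp h2
        omega
  · rintro ⟨rfl, hshape⟩
    have hρ : ∀ k, (fun k => if k = i then lam.rowLen i + 1 else lam.rowLen k) (k + 1) ≤
        (fun k => if k = i then lam.rowLen i + 1 else lam.rowLen k) k := by
      intro k
      simp only []
      by_cases h1 : k + 1 = i
      · rw [if_pos h1, if_neg (by omega)]
        rcases hshape with h | h
        · omega
        · have hk' : k = i - 1 := by omega
          subst hk'
          omega
      · rw [if_neg h1]
        by_cases h2 : k = i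
        · subst h2
          rw [if_pos rfl]
          have := lam.rowLen_anti k (k + 1) (by omega)
          omega
        · rw [if_neg h2]
          exact lam.rowLen_anti k (k + 1) (by omega)
    have hN : ∀ k, lam.colLen 0 + i + 1 ≤ k →
        (fun k => if k = i then lam.rowLen i + 1 else lam.rowLen k) k = 0 := by
      intro k hk
      simp only []
      rw [if_neg (by omega)]
      exact rowLen_eq_zero' lam (by omega)
    refine ⟨by rw [YoungDiagram.mem_iff_lt_rowLen]; omega,
      ofRows _ hρ (lam.colLen 0 + i + 1) hN, ?_⟩
    ext ⟨a, b⟩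
    simp only [Finset.mem_coe, YoungDiagram.mem_cells, Set.mem_insert_iff,
      YoungDiagram.mem_iff_lt_rowLen, rowLen_ofRows, Prod.mk.injEq]
    by_cases h : a = i
    · subst h
      rw [if_pos rfl]
      omega
    · rw [if_neg h]
      constructor
      · intro hb; right; exact hb
      · rintro (⟨h1, h2⟩ | hb)
        · omega
        · exact hb

lemma addableRes_iff (n : ℕ) (r : ZMod n) (lam : YoungDiagram) (i j : ℕ) :
    AddableRes n r lam (i, j) ↔ j = lam.rowLen i ∧ bet lam i ∈ Sadd n r lam := by
  have hres : res n (i, lam.rowLen i) = ((bet lam i : ℤ) : ZMod n) := by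
    rw [res_eq', bet_def]
  rw [AddableRes, addable_iff]
  constructor
  · rintro ⟨⟨rfl, hshape⟩, hr⟩
    exact ⟨rfl, bet_mem lam i, by rw [← hr, hres], (succ_not_mem_iff lam i).mpr hshape⟩
  · rintro ⟨rfl, hb, hr, hs⟩
    exact ⟨⟨rfl, (succ_not_mem_iff lam i).mp hs⟩, by rw [hres, hr]⟩

lemma removable_iff (lam : YoungDiagram) (i j : ℕ) :
    Removable lam (i, j) ↔
      (j + 1 = lam.rowLen i ∧ lam.rowLen (i + 1) < lam.rowLen i) := by
  constructor
  · rintro ⟨hmem, hhook⟩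
    change hook lam i j = 1 at hhook
    have h1 : j < lam.rowLen i := YoungDiagram.mem_iff_lt_rowLen.mp hmem
    have h2 : i < lam.colLen j := YoungDiagram.mem_iff_lt_colLen.mp hmem
    rw [hook] at hhook
    have h3 : lam.rowLen i = j + 1 := by omega
    have h4 : lam.colLen j = i + 1 := by omega
    have h5 : (i + 1, j) ∉ lam := by
      rw [YoungDiagram.mem_iff_lt_colLen]
      omega
    have h6 : lam.rowLen (i + 1) ≤ j := by
      by_contra h
      exact h5 (YoungDiagram.mem_iff_lt_rowLen.mpr (by omega))
    exact ⟨by omega, by omega⟩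
  · rintro ⟨hj, hlt⟩
    have hmem : (i, j) ∈ lam := YoungDiagram.mem_iff_lt_rowLen.mpr (by omega)
    have hcol : ∀ k : ℕ, (k, j) ∈ lam ↔ k < i + 1 := by
      intro k
      rw [YoungDiagram.mem_iff_lt_rowLen]
      constructor
      · intro h
        by_contra hc
        push_neg at hc
        have := lam.rowLen_anti (i + 1) k (by omega)
        omega
      · intro h
        have := lam.rowLen_anti k i (by omega)
        omega
    have hcolj : lam.colLen j = i + 1 := by
      have h1 : ∀ k, k < lam.colLen j ↔ k < i + 1 := fun k =>
        (YoungDiagram.mem_iff_lt_colLen.symm).trans (hcol k)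
      have h2 := h1 (i + 1)
      have h3 := h1 (lam.colLen j)
      omega
    refine ⟨hmem, ?_⟩
    show hook lam i j = 1
    rw [hook, hcolj]
    omega

lemma removableRes_iff (n : ℕ) (r : ZMod n) (lam : YoungDiagram) (i j : ℕ) :
    RemovableRes n r lam (i, j) ↔ j + 1 = lam.rowLen i ∧ bet lam i ∈ Trem n r lam := by
  rw [RemovableRes, removable_iff]
  constructor
  · rintro ⟨⟨hj, hlt⟩, hres⟩
    refine ⟨hj, bet_mem lam i, ?_, (pred_not_mem_iff lam i).mpr hlt⟩
    rw [res_eq'] at hres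
    have hb : ((bet lam i : ℤ) : ZMod n) = ((((j : ℤ) - (i : ℤ)) : ℤ) : ZMod n) + 1 := by
      rw [bet_def]
      have he : (lam.rowLen i : ℤ) - i = ((j : ℤ) - i) + 1 := by omega
      rw [he]
      push_cast
      ring
    rw [hb, hres]
  · rintro ⟨hj, hb, hr, hs⟩
    refine ⟨⟨hj, (pred_not_mem_iff lam i).mp hs⟩, ?_⟩
    rw [res_eq']
    have hb2 : ((((j : ℤ) - (i : ℤ)) : ℤ) : ZMod n) = ((bet lam i : ℤ) : ZMod n) - 1 := by
      rw [bet_def]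
      have he : (j : ℤ) - i = ((lam.rowLen i : ℤ) - i) - 1 := by omega
      rw [he]
      push_cast
      ring
    rw [hb2, hr]
    ring

lemma closure_add {n : ℕ} (hn : 2 ≤ n) {lam : YoungDiagram} {r : ZMod n}
    (hcl : ∀ z ∈ Bset lam, z - n ∈ Bset lam) :
    ∀ z ∈ {z : ℤ | (z ∈ Bset lam ∧ z ∉ Sadd n r lam) ∨ z - 1 ∈ Sadd n r lam},
      z - n ∈ {z : ℤ | (z ∈ Bset lam ∧ z ∉ Sadd n r lam) ∨ z - 1 ∈ Sadd n r lam} := by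
  haveI : Fact (1 < n) := ⟨hn⟩
  have hcast : ∀ z : ℤ, ((z - n : ℤ) : ZMod n) = (z : ZMod n) := by
    intro z
    push_cast
    simp
  rintro z (⟨hzB, hzS⟩ | hz1)
  · have h1 := hcl z hzB
    by_cases h2 : z - n ∈ Sadd n r lam
    · obtain ⟨_, hres, hsucc⟩ := h2
      have hzr : (z : ZMod n) = r := by rw [← hres, hcast]
      have hz1 : z + 1 ∈ Bset lam := by
        by_contra h
        exact hzS ⟨hzB, hzr, h⟩
      have h3 := hcl _ hz1
      have h4 : z + 1 - n = z - n + 1 := by ring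
      rw [h4] at h3
      exact absurd h3 hsucc
    · exact Or.inl ⟨h1, h2⟩
  · obtain ⟨hb, hr, hnb⟩ := hz1
    have h1 := hcl _ hb
    by_cases h2 : z - n ∈ Bset lam
    · left
      refine ⟨h2, ?_⟩
      rintro ⟨_, hres, _⟩
      have h3 : ((z - n : ℤ) : ZMod n) = ((z - 1 : ℤ) : ZMod n) + 1 := by
        rw [hcast]
        push_cast
        ring
      rw [hres, hr] at h3
      exact one_ne_zero (left_eq_add.mp h3)
    · right
      have h4 : z - n - 1 = z - 1 - n := by ring
      refine ⟨h4 ▸ h1, ?_, ?_⟩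
      · rw [h4, hcast]
        exact hr
      · have h5 : z - n - 1 + 1 = z - n := by ring
        rw [h5]
        exact h2

lemma closure_rem {n : ℕ} (hn : 2 ≤ n) {lam : YoungDiagram} {r : ZMod n}
    (hcl : ∀ z ∈ Bset lam, z - n ∈ Bset lam) :
    ∀ z ∈ {z : ℤ | (z ∈ Bset lam ∧ z ∉ Trem n r lam) ∨ z + 1 ∈ Trem n r lam},
      z - n ∈ {z : ℤ | (z ∈ Bset lam ∧ z ∉ Trem n r lam) ∨ z + 1 ∈ Trem n r lam} := by
  haveI : Fact (1 < n) := ⟨hn⟩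
  have hcast : ∀ z : ℤ, ((z - n : ℤ) : ZMod n) = (z : ZMod n) := by
    intro z
    push_cast
    simp
  rintro z (⟨hzB, hzT⟩ | hz1)
  · have h1 := hcl z hzB
    by_cases h2 : z - n ∈ Trem n r lam
    · obtain ⟨_, hres, hpred⟩ := h2
      have hzr : (z : ZMod n) = r + 1 := by rw [← hres, hcast]
      have hz1 : z - 1 ∈ Bset lam := by
        by_contra h
        exact hzT ⟨hzB, hzr, h⟩
      have h3 := hcl _ hz1
      have h4 : z - 1 - n = z - n - 1 := by ring
      rw [h4] at h3
      exact absurd h3 hpred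
    · exact Or.inl ⟨h1, h2⟩
  · obtain ⟨hb, hr, hnb⟩ := hz1
    have h1 := hcl _ hb
    by_cases h2 : z - n ∈ Bset lam
    · left
      refine ⟨h2, ?_⟩
      rintro ⟨_, hres, _⟩
      have h3 : ((z + 1 : ℤ) : ZMod n) = ((z - n : ℤ) : ZMod n) + 1 := by
        rw [hcast]
        push_cast
        ring
      rw [hres, hr] at h3
      exact one_ne_zero (left_eq_add.mp h3)
    · right
      have h4 : z - n + 1 = z + 1 - n := by ring
      refine ⟨h4 ▸ h1, ?_, ?_⟩
      · rw [h4, hcast]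
        exact hr
      · have h5 : z - n + 1 - 1 = z - n := by ring
        rw [h5]
        exact h2

end AddRemove

section Main

lemma exists_add (n : ℕ) (hn : 2 ≤ n) (r : ZMod n) (lam : YoungDiagram)
    (hcore : IsCore n lam) :
    ∃ mu : YoungDiagram,
      (mu.cells : Set (ℕ × ℕ)) = (lam.cells : Set (ℕ × ℕ)) ∪ {c | AddableRes n r lam c} ∧
      IsCore n mu := by
  classical
  have hclB := closed_of_isCore hcore
  set ρ : ℕ → ℕ := fun i => if bet lam i ∈ Sadd n r lam then lam.rowLen i + 1
    else lam.rowLen i with hρdef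
  have hρi : ∀ i, lam.rowLen i ≤ ρ i := by
    intro i
    simp only [hρdef]
    split <;> omega
  have hanti : ∀ i, ρ (i + 1) ≤ ρ i := by
    intro i
    have hle := lam.rowLen_anti i (i + 1) (by omega)
    have h1 := hρi i
    by_cases h : bet lam (i + 1) ∈ Sadd n r lam
    · have h2 := (succ_not_mem_iff lam (i + 1)).mp h.2.2
      simp only [Nat.add_sub_cancel] at h2
      have h3 : lam.rowLen (i + 1) < lam.rowLen i := by omega
      have h4 : ρ (i + 1) = lam.rowLen (i + 1) + 1 := by simp only [hρdef]; rw [if_pos h]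
      omega
    · have h4 : ρ (i + 1) = lam.rowLen (i + 1) := by simp only [hρdef]; rw [if_neg h]
      omega
  have hN : ∀ i, lam.colLen 0 + 1 ≤ i → ρ i = 0 := by
    intro i hi
    have h0 : lam.rowLen i = 0 := rowLen_eq_zero' lam (by omega)
    have h1 : bet lam i ∉ Sadd n r lam := by
      rintro ⟨_, _, hs⟩
      have h2 := (succ_not_mem_iff lam i).mp hs
      have h3 : lam.rowLen (i - 1) = 0 := rowLen_eq_zero' lam (by omega)
      omega
    simp only [hρdef]
    rw [if_neg h1]
    exact h0
  refine ⟨ofRows ρ hanti _ hN, ?_, ?_⟩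
  · ext ⟨a, b⟩
    simp only [Finset.mem_coe, YoungDiagram.mem_cells, Set.mem_union,
      Set.mem_setOf_eq, YoungDiagram.mem_iff_lt_rowLen, rowLen_ofRows, addableRes_iff]
    by_cases h : bet lam a ∈ Sadd n r lam
    · have h4 : ρ a = lam.rowLen a + 1 := by simp only [hρdef]; rw [if_pos h]
      rw [h4]
      constructor
      · intro hb
        rcases Nat.lt_or_ge b (lam.rowLen a) with h5 | h5
        · exact Or.inl h5
        · exact Or.inr ⟨by omega, h⟩
      · rintro (h5 | ⟨h5, _⟩) <;> omega
    · have h4 : ρ a = lam.rowLen a := by simp only [hρdef]; rw [if_neg h]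
      rw [h4]
      constructor
      · exact Or.inl
      · rintro (h5 | ⟨h5, h6⟩)
        · exact h5
        · exact absurd h6 h
  · apply isCore_of_closed
    have hBeq : Bset (ofRows ρ hanti _ hN) =
        {z : ℤ | (z ∈ Bset lam ∧ z ∉ Sadd n r lam) ∨ z - 1 ∈ Sadd n r lam} := by
      ext z
      constructor
      · rintro ⟨i, hi⟩
        rw [bet_def, rowLen_ofRows] at hi
        by_cases h : bet lam i ∈ Sadd n r lam
        · right
          have h4 : ρ i = lam.rowLen i + 1 := by simp only [hρdef]; rw [if_pos h]
          have h5 : z - 1 = bet lam i := by rw [bet_def]; omega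
          rw [h5]
          exact h
        · left
          have h4 : ρ i = lam.rowLen i := by simp only [hρdef]; rw [if_neg h]
          have h5 : z = bet lam i := by rw [bet_def]; omega
          rw [h5]
          exact ⟨bet_mem lam i, h⟩
      · rintro (⟨⟨i, hi⟩, hs⟩ | hz1)
        · refine ⟨i, ?_⟩
          rw [bet_def, rowLen_ofRows]
          have h4 : ρ i = lam.rowLen i := by
            simp only [hρdef]; rw [if_neg (by rw [hi]; exact hs)]
          rw [h4, ← bet_def, hi]
        · obtain ⟨i, hi⟩ := hz1.1
          have hS : bet lam i ∈ Sadd n r lam := by rw [hi]; exact hz1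
          refine ⟨i, ?_⟩
          rw [bet_def, rowLen_ofRows]
          have h4 : ρ i = lam.rowLen i + 1 := by
            simp only [hρdef]; rw [if_pos hS]
          rw [h4]
          rw [bet_def] at hi
          omega
    rw [hBeq]
    exact closure_add hn hclB

lemma exists_rem (n : ℕ) (hn : 2 ≤ n) (r : ZMod n) (lam : YoungDiagram)
    (hcore : IsCore n lam) :
    ∃ mu : YoungDiagram,
      (mu.cells : Set (ℕ × ℕ)) = (lam.cells : Set (ℕ × ℕ)) \ {c | RemovableRes n r lam c} ∧
      IsCore n mu := by
  classical
  have hclB := closed_of_isCore hcore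
  set ρ : ℕ → ℕ := fun i => if bet lam i ∈ Trem n r lam then lam.rowLen i - 1
    else lam.rowLen i with hρdef
  have hkey : ∀ i, bet lam i ∈ Trem n r lam → lam.rowLen (i + 1) < lam.rowLen i := by
    intro i h
    exact (pred_not_mem_iff lam i).mp h.2.2
  have hρi : ∀ i, ρ i ≤ lam.rowLen i := by
    intro i
    simp only [hρdef]
    split <;> omega
  have hanti : ∀ i, ρ (i + 1) ≤ ρ i := by
    intro i
    have hle := lam.rowLen_anti i (i + 1) (by omega)
    have h1 := hρi (i + 1)
    by_cases h : bet lam i ∈ Trem n r lam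
    · have h2 := hkey i h
      have h4 : ρ i = lam.rowLen i - 1 := by simp only [hρdef]; rw [if_pos h]
      omega
    · have h4 : ρ i = lam.rowLen i := by simp only [hρdef]; rw [if_neg h]
      omega
  have hN : ∀ i, lam.colLen 0 ≤ i → ρ i = 0 := by
    intro i hi
    have h0 : lam.rowLen i = 0 := rowLen_eq_zero' lam hi
    simp only [hρdef]
    split <;> omega
  refine ⟨ofRows ρ hanti _ hN, ?_, ?_⟩
  · ext ⟨a, b⟩
    simp only [Finset.mem_coe, YoungDiagram.mem_cells, Set.mem_diff,
      Set.mem_setOf_eq, YoungDiagram.mem_iff_lt_rowLen, rowLen_ofRows, removableRes_iff]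
    by_cases h : bet lam a ∈ Trem n r lam
    · have h2 := hkey a h
      have h4 : ρ a = lam.rowLen a - 1 := by simp only [hρdef]; rw [if_pos h]
      rw [h4]
      constructor
      · intro hb
        exact ⟨by omega, by rintro ⟨h5, _⟩; omega⟩
      · rintro ⟨h5, h6⟩
        rcases Nat.lt_or_ge b (lam.rowLen a - 1) with h7 | h7
        · exact h7
        · exact absurd ⟨by omega, h⟩ h6
    · have h4 : ρ a = lam.rowLen a := by simp only [hρdef]; rw [if_neg h]
      rw [h4]
      constructor
      · intro hb
        exact ⟨hb, by rintro ⟨_, h5⟩; exact h h5⟩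
      · rintro ⟨h5, _⟩
        exact h5
  · apply isCore_of_closed
    have hBeq : Bset (ofRows ρ hanti _ hN) =
        {z : ℤ | (z ∈ Bset lam ∧ z ∉ Trem n r lam) ∨ z + 1 ∈ Trem n r lam} := by
      ext z
      constructor
      · rintro ⟨i, hi⟩
        rw [bet_def, rowLen_ofRows] at hi
        by_cases h : bet lam i ∈ Trem n r lam
        · right
          have h2 := hkey i h
          have h4 : ρ i = lam.rowLen i - 1 := by simp only [hρdef]; rw [if_pos h]
          have h5 : z + 1 = bet lam i := by rw [bet_def]; omega
          rw [h5]
          exact h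
        · left
          have h4 : ρ i = lam.rowLen i := by simp only [hρdef]; rw [if_neg h]
          have h5 : z = bet lam i := by rw [bet_def]; omega
          rw [h5]
          exact ⟨bet_mem lam i, h⟩
      · rintro (⟨⟨i, hi⟩, hs⟩ | hz1)
        · refine ⟨i, ?_⟩
          rw [bet_def, rowLen_ofRows]
          have h4 : ρ i = lam.rowLen i := by
            simp only [hρdef]; rw [if_neg (by rw [hi]; exact hs)]
          rw [h4, ← bet_def, hi]
        · obtain ⟨i, hi⟩ := hz1.1
          have hT : bet lam i ∈ Trem n r lam := by rw [hi]; exact hz1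
          have h2 := hkey i hT
          refine ⟨i, ?_⟩
          rw [bet_def, rowLen_ofRows]
          have h4 : ρ i = lam.rowLen i - 1 := by simp only [hρdef]; rw [if_pos hT]
          rw [h4]
          rw [bet_def] at hi
          omega
    rw [hBeq]
    exact closure_rem hn hclB

end Main


/-- For an n-core λ and residue i, the result sᵢλ of adding all addable
i-boxes (resp. deleting all removable i-boxes, resp. doing nothing) is again an
n-core. -/
theorem statement6 (n : ℕ) (hn : 2 ≤ n) (lam : YoungDiagram) (hcore : IsCore n lam)
    (r : ZMod n) :
    ∃ mu : YoungDiagram, (mu.cells : Set (ℕ × ℕ)) = sActSet n r lam ∧ IsCore n mu := by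
  classical
  by_cases h1 : ∃ c, AddableRes n r lam c
  · obtain ⟨mu, hc, hcore'⟩ := exists_add n hn r lam hcore
    refine ⟨mu, ?_, hcore'⟩
    rw [hc, sActSet, if_pos h1]
  · by_cases h2 : ∃ c, RemovableRes n r lam c
    · obtain ⟨mu, hc, hcore'⟩ := exists_rem n hn r lam hcore
      refine ⟨mu, ?_, hcore'⟩
      rw [hc, sActSet, if_neg h1, if_pos h2]
    · refine ⟨lam, ?_, hcore⟩
      rw [sActSet, if_neg h1, if_neg h2]

end FV
end

section
/- Let n ≥ 2, m ≥ 1, and let λ be an n-core. Then λ is also an (mn+1)-core if and only if ⟨n⃗(λ), αᵢ⟩ ≥ −m for all 1 ≤ i ≤ n−1 and ⟨n⃗(λ), θ⟩ ≤ m + 1. -/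
open scoped BigOperators

namespace FV

lemma hook_int (lam : YoungDiagram) {i j : ℕ} (h : (i, j) ∈ lam) :
    (hook lam i j : ℤ) = (lam.rowLen i : ℤ) - j + lam.colLen j - i - 1 := by
  have h1 : j < lam.rowLen i := YoungDiagram.mem_iff_lt_rowLen.mp h
  have h2 : i < lam.colLen j := YoungDiagram.mem_iff_lt_colLen.mp h
  unfold hook; omega

lemma mem_beads_of_neg (lam : YoungDiagram) {z : ℤ} (h : z < 0) : z ∈ beads lam := Or.inl h

lemma beta_mem_beads (lam : YoungDiagram) {i : ℕ} (h : (i, 0) ∈ lam) :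
    (hook lam i 0 : ℤ) ∈ beads lam := Or.inr ⟨i, h, rfl⟩

/-- The gap corresponding to a box of `λ` is not a bead. -/
lemma gap_not_bead (lam : YoungDiagram) {i j : ℕ} (h : (i, j) ∈ lam) :
    ((hook lam i 0 : ℤ) - hook lam i j) ∉ beads lam := by
  have h0 : (i, 0) ∈ lam := lam.up_left_mem le_rfl (Nat.zero_le j) h
  have hi0 := hook_int lam h0
  have hij := hook_int lam h
  have hcc : lam.colLen j ≤ lam.colLen 0 := lam.colLen_anti 0 j (Nat.zero_le j)
  rintro (hneg | ⟨k, hk, he⟩)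
  · have h2 : i < lam.colLen j := YoungDiagram.mem_iff_lt_colLen.mp h
    omega
  · have hk0 := hook_int lam hk
    by_cases hkc : k < lam.colLen j
    · have hmem : (k, j) ∈ lam := YoungDiagram.mem_iff_lt_colLen.mpr hkc
      have hlt : j < lam.rowLen k := YoungDiagram.mem_iff_lt_rowLen.mp hmem
      omega
    · have hnm : ¬ (k, j) ∈ lam := fun hc => hkc (YoungDiagram.mem_iff_lt_colLen.mp hc)
      have hle : lam.rowLen k ≤ j := by
        by_contra hc
        exact hnm (YoungDiagram.mem_iff_lt_rowLen.mpr (by omega))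
      omega

/-- The auxiliary strictly increasing (here: monotone) function `j ↦ j − colLen j`. -/
def fcol (lam : YoungDiagram) (j : ℕ) : ℤ := (j : ℤ) - lam.colLen j

lemma fcol_mono (lam : YoungDiagram) : Monotone (fcol lam) := by
  intro a b hab
  have := lam.colLen_anti a b hab
  unfold fcol; omega

/-- Every gap below a bead `hook i 0` arises from a box in row `i`. -/
lemma box_of_gap (lam : YoungDiagram) {i : ℕ} (h0 : (i, 0) ∈ lam) {g : ℤ}
    (hg0 : 0 ≤ g) (hgb : g < (hook lam i 0 : ℤ)) (hgn : g ∉ beads lam) :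
    ∃ j : ℕ, (i, j) ∈ lam ∧ (hook lam i j : ℤ) = (hook lam i 0 : ℤ) - g := by
  have hi0 := hook_int lam h0
  set t : ℤ := g - lam.colLen 0 with ht
  have hex : ∃ J : ℕ, t < fcol lam J := by
    refine ⟨g.toNat + 1, ?_⟩
    have h1 : lam.colLen (g.toNat + 1) ≤ lam.colLen 0 := lam.colLen_anti 0 _ (Nat.zero_le _)
    unfold fcol; omega
  have hJt := Nat.find_spec hex
  have hJ0 : Nat.find hex ≠ 0 := by
    intro hc
    rw [hc] at hJt
    unfold fcol at hJt
    simp only [Nat.cast_zero] at hJt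
    omega
  set j := Nat.find hex - 1 with hj
  have hjle : fcol lam j ≤ t := by
    have := Nat.find_min hex (show j < Nat.find hex by omega)
    omega
  have hjJ : j + 1 = Nat.find hex := by omega
  have hsucc : t < fcol lam (j + 1) := hjJ ▸ hJt
  rcases eq_or_lt_of_le hjle with heq | hlt
  · -- `fcol j = t`: the box is `(i, j)`
    have hjr : j < lam.rowLen i := by
      by_contra hc
      push_neg at hc
      have hmon := fcol_mono lam hc
      have hcl : lam.colLen (lam.rowLen i) ≤ i := by
        by_contra hc2
        push_neg at hc2
        have hmem : (i, lam.rowLen i) ∈ lam := YoungDiagram.mem_iff_lt_colLen.mpr hc2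
        have := YoungDiagram.mem_iff_lt_rowLen.mp hmem
        omega
      unfold fcol at hmon heq
      omega
    have hmem : (i, j) ∈ lam := YoungDiagram.mem_iff_lt_rowLen.mpr hjr
    refine ⟨j, hmem, ?_⟩
    have hij := hook_int lam hmem
    unfold fcol at heq
    omega
  · -- `fcol j < t < fcol (j+1)`: then `g` is a bead, contradiction
    exfalso
    unfold fcol at hlt hsucc
    have hcc : lam.colLen (j + 1) ≤ lam.colLen j := lam.colLen_anti j (j + 1) (Nat.le_succ j)
    set k : ℕ := lam.colLen j - (t - ((j : ℤ) - lam.colLen j)).toNat with hk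
    have hkb1 : lam.colLen (j + 1) ≤ k := by omega
    have hkb2 : k < lam.colLen j := by omega
    have hkj : (k, j) ∈ lam := YoungDiagram.mem_iff_lt_colLen.mpr hkb2
    have hkj1 : lam.rowLen k ≤ j + 1 := by
      by_contra hc
      push_neg at hc
      have hmem : (k, j + 1) ∈ lam := YoungDiagram.mem_iff_lt_rowLen.mpr hc
      have := YoungDiagram.mem_iff_lt_colLen.mp hmem
      omega
    have hrow : lam.rowLen k = j + 1 := by
      have := YoungDiagram.mem_iff_lt_rowLen.mp hkj
      omega
    have hk0 : (k, 0) ∈ lam := lam.up_left_mem le_rfl (Nat.zero_le j) hkj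
    apply hgn
    refine Or.inr ⟨k, hk0, ?_⟩
    have hik := hook_int lam hk0
    omega

/-- The classical criterion: `λ` is an `s`-core iff its bead set is closed under
subtracting `s`. -/
lemma core_iff_closed (s : ℕ) (hs : 1 ≤ s) (lam : YoungDiagram) :
    IsCore s lam ↔ ∀ z ∈ beads lam, z - s ∈ beads lam := by
  constructor
  · intro hc z hz
    by_contra hns
    have hzs : 0 ≤ z - s := by
      by_contra hc2
      exact hns (Or.inl (by omega))
    obtain ⟨k, hk, he⟩ : ∃ k, (k, 0) ∈ lam ∧ z = (hook lam k 0 : ℤ) := by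
      rcases hz with h | h
      · omega
      · exact h
    have hlt : z - s < (hook lam k 0 : ℤ) := by omega
    obtain ⟨j, hj, hje⟩ := box_of_gap lam hk hzs hlt hns
    have hjs : hook lam k j = s := by omega
    exact hc (k, j) ((YoungDiagram.mem_cells (μ := lam) (k, j)).mpr hj) (hjs ▸ dvd_refl s)
  · intro hcl c hc hdvd
    obtain ⟨i, j⟩ := c
    obtain ⟨d, hd⟩ := hdvd
    have hp := hook_pos lam i j
    have hd1 : 1 ≤ d := by
      rcases Nat.eq_zero_or_pos d with h | h
      · subst h; simp at hd; omega
      · exact h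
    have hmemij : (i, j) ∈ lam := (YoungDiagram.mem_cells (μ := lam) (i, j)).mp hc
    have hmem : (i, 0) ∈ lam := lam.up_left_mem le_rfl (Nat.zero_le j) hmemij
    have key : ∀ e : ℕ, (hook lam i 0 : ℤ) - s * e ∈ beads lam := by
      intro e
      induction e with
      | zero => simpa using beta_mem_beads lam hmem
      | succ e ih =>
        have h2 := hcl _ ih
        have heq : (hook lam i 0 : ℤ) - s * (e + 1 : ℕ) =
            ((hook lam i 0 : ℤ) - s * e) - s := by push_cast; ring
        rw [heq]; exact h2
    have hkd := key d
    have hgap := gap_not_bead lam hmemij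
    apply hgap
    have hcast : (hook lam i j : ℤ) = (s : ℤ) * d := by exact_mod_cast hd
    rw [hcast]
    exact hkd

/-- The balanced bead set of `λ` (same shift as used in `nvec`). -/
def Bb (n : ℕ) (lam : YoungDiagram) : Set ℤ :=
  shiftSet (-(balance n (beads lam))) (beads lam)

/-- The set of levels of runner `c` in the balanced abacus. -/
def Sc (n : ℕ) (lam : YoungDiagram) (c : ℕ) : Set ℤ :=
  {r : ℤ | r * (n : ℤ) + (c : ℤ) ∈ Bb n lam}

lemma maxLevel_Bb (n : ℕ) (lam : YoungDiagram) (c : ℕ) :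
    maxLevel n (Bb n lam) c = sSup (Sc n lam c) := rfl

lemma nvec_eq (n : ℕ) (lam : YoungDiagram) (i : Fin n) :
    nvec n lam i = sSup (Sc n lam (i : ℕ)) := rfl

lemma Bb_closed (n : ℕ) (lam : YoungDiagram) (s : ℤ)
    (h : ∀ z ∈ beads lam, z - s ∈ beads lam) :
    ∀ z ∈ Bb n lam, z - s ∈ Bb n lam := by
  intro z hz
  have h1 : z - (-(balance n (beads lam))) ∈ beads lam := hz
  have h2 := h _ h1
  show (z - s) - (-(balance n (beads lam))) ∈ beads lam
  have he : (z - s) - (-(balance n (beads lam))) =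
      (z - (-(balance n (beads lam)))) - s := by ring
  rw [he]; exact h2

lemma closed_of_Bb (n : ℕ) (lam : YoungDiagram) (s : ℤ)
    (h : ∀ z ∈ Bb n lam, z - s ∈ Bb n lam) :
    ∀ z ∈ beads lam, z - s ∈ beads lam := by
  intro z hz
  have hzd : z + (-(balance n (beads lam))) ∈ Bb n lam := by
    show z + (-(balance n (beads lam))) - (-(balance n (beads lam))) ∈ beads lam
    have he : z + (-(balance n (beads lam))) - (-(balance n (beads lam))) = z := by ring
    rw [he]; exact hz
  have h2 := h _ hzd
  have h3 : (z + (-(balance n (beads lam))) - s) - (-(balance n (beads lam))) ∈ beads lam := h2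
  have he : (z + (-(balance n (beads lam))) - s) - (-(balance n (beads lam))) = z - s := by ring
  rwa [he] at h3

lemma beads_le (lam : YoungDiagram) :
    ∀ z ∈ beads lam, z ≤ (lam.rowLen 0 : ℤ) + lam.colLen 0 := by
  rintro z (h | ⟨k, hk, he⟩)
  · omega
  · have hik := hook_int lam hk
    have hrr : lam.rowLen k ≤ lam.rowLen 0 := lam.rowLen_anti 0 k (Nat.zero_le k)
    omega

lemma Sc_nonempty (n : ℕ) (hn : 1 ≤ n) (lam : YoungDiagram) (c : ℕ) :
    (Sc n lam c).Nonempty := by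
  set d := -(balance n (beads lam)) with hd
  set r : ℤ := -(((c : ℤ) - d).natAbs) - 1 with hr
  refine ⟨r, ?_⟩
  show r * (n : ℤ) + (c : ℤ) - d ∈ beads lam
  apply mem_beads_of_neg
  have h1 : r * (n : ℤ) ≤ r * 1 :=
    mul_le_mul_of_nonpos_left (by exact_mod_cast hn) (by omega)
  have h2 : (c : ℤ) - d ≤ (((c : ℤ) - d).natAbs : ℤ) := Int.le_natAbs
  have h3 : r * 1 = r := by ring
  rw [h3] at h1
  omega

lemma Sc_bdd (n : ℕ) (hn : 1 ≤ n) (lam : YoungDiagram) (c : ℕ) :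
    BddAbove (Sc n lam c) := by
  set d := -(balance n (beads lam)) with hd
  refine ⟨|(lam.rowLen 0 : ℤ) + lam.colLen 0 + d| + 1, ?_⟩
  intro r hr
  have hz : r * (n : ℤ) + (c : ℤ) - d ∈ beads lam := hr
  have hb := beads_le lam _ hz
  have habs := le_abs_self ((lam.rowLen 0 : ℤ) + lam.colLen 0 + d)
  have habs0 := abs_nonneg ((lam.rowLen 0 : ℤ) + lam.colLen 0 + d)
  rcases le_or_gt r 0 with h | h
  · linarith
  · have h1 : r * 1 ≤ r * (n : ℤ) :=
      mul_le_mul_of_nonneg_left (by exact_mod_cast hn) (le_of_lt h)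
    have hc0 : (0 : ℤ) ≤ (c : ℤ) := Int.ofNat_nonneg c
    nlinarith

lemma Sc_pred (n : ℕ) (lam : YoungDiagram)
    (hcl : ∀ z ∈ Bb n lam, z - (n : ℤ) ∈ Bb n lam) (c : ℕ) {r : ℤ}
    (hr : r ∈ Sc n lam c) : r - 1 ∈ Sc n lam c := by
  have h1 := hcl _ hr
  show (r - 1) * (n : ℤ) + (c : ℤ) ∈ Bb n lam
  have he : (r - 1) * (n : ℤ) + (c : ℤ) = (r * (n : ℤ) + (c : ℤ)) - (n : ℤ) := by ring
  rw [he]; exact h1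

lemma Sc_mem_iff (n : ℕ) (hn : 1 ≤ n) (lam : YoungDiagram)
    (hcl : ∀ z ∈ Bb n lam, z - (n : ℤ) ∈ Bb n lam) (c : ℕ) (r : ℤ) :
    r ∈ Sc n lam c ↔ r ≤ sSup (Sc n lam c) := by
  constructor
  · exact fun h => le_csSup (Sc_bdd n hn lam c) h
  · intro h
    have hmem := Int.csSup_mem (Sc_nonempty n hn lam c) (Sc_bdd n hn lam c)
    have key : ∀ k : ℕ, sSup (Sc n lam c) - k ∈ Sc n lam c := by
      intro k
      induction k with
      | zero => simpa using hmem
      | succ k ih =>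
        have h2 := Sc_pred n lam hcl c ih
        have he : sSup (Sc n lam c) - ((k : ℕ) + 1 : ℕ) =
            (sSup (Sc n lam c) - k) - 1 := by push_cast; ring
        rw [he]; exact h2
    have hk := key (sSup (Sc n lam c) - r).toNat
    have he : sSup (Sc n lam c) - ((sSup (Sc n lam c) - r).toNat : ℤ) = r := by omega
    rwa [he] at hk

/-- Closure under `−(mn+1)` of the balanced abacus is equivalent to the level
inequalities. -/
lemma closed_iff_ineq (n : ℕ) (hn : 2 ≤ n) (lam : YoungDiagram)
    (hcl : ∀ z ∈ Bb n lam, z - (n : ℤ) ∈ Bb n lam) (m : ℕ) :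
    (∀ z ∈ Bb n lam, z - ((m : ℤ) * n + 1) ∈ Bb n lam) ↔
      ((∀ c : ℕ, 1 ≤ c → c ≤ n - 1 →
          sSup (Sc n lam c) - m ≤ sSup (Sc n lam (c - 1))) ∧
        sSup (Sc n lam 0) - ((m : ℤ) + 1) ≤ sSup (Sc n lam (n - 1))) := by
  have hn1 : 1 ≤ n := by omega
  constructor
  · intro h
    constructor
    · intro c hc1 hc2
      have hm : sSup (Sc n lam c) ∈ Sc n lam c :=
        Int.csSup_mem (Sc_nonempty n hn1 lam c) (Sc_bdd n hn1 lam c)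
      have h2 := h _ hm
      have h9 : ((c - 1 : ℕ) : ℤ) = (c : ℤ) - 1 := by omega
      have he : (sSup (Sc n lam c) * (n : ℤ) + (c : ℤ)) - ((m : ℤ) * n + 1) =
          (sSup (Sc n lam c) - m) * (n : ℤ) + ((c - 1 : ℕ) : ℤ) := by
        rw [h9]; ring
      have h3 : sSup (Sc n lam c) - m ∈ Sc n lam (c - 1) := by
        show (sSup (Sc n lam c) - m) * (n : ℤ) + ((c - 1 : ℕ) : ℤ) ∈ Bb n lam
        rw [← he]; exact h2
      exact le_csSup (Sc_bdd n hn1 lam (c - 1)) h3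
    · have hm : sSup (Sc n lam 0) ∈ Sc n lam 0 :=
        Int.csSup_mem (Sc_nonempty n hn1 lam 0) (Sc_bdd n hn1 lam 0)
      have h2 := h _ hm
      have h9 : ((n - 1 : ℕ) : ℤ) = (n : ℤ) - 1 := by omega
      have he : (sSup (Sc n lam 0) * (n : ℤ) + ((0 : ℕ) : ℤ)) - ((m : ℤ) * n + 1) =
          (sSup (Sc n lam 0) - ((m : ℤ) + 1)) * (n : ℤ) + ((n - 1 : ℕ) : ℤ) := by
        rw [h9]; push_cast; ring
      have h3 : sSup (Sc n lam 0) - ((m : ℤ) + 1) ∈ Sc n lam (n - 1) := by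
        show (sSup (Sc n lam 0) - ((m : ℤ) + 1)) * (n : ℤ) + ((n - 1 : ℕ) : ℤ) ∈ Bb n lam
        rw [← he]; exact h2
      exact le_csSup (Sc_bdd n hn1 lam (n - 1)) h3
  · rintro ⟨h1, h2⟩ z hz
    set c : ℕ := (z % (n : ℤ)).toNat with hc
    have hmodnn : 0 ≤ z % (n : ℤ) := Int.emod_nonneg z (by omega)
    have hmodlt : z % (n : ℤ) < (n : ℤ) := Int.emod_lt_of_pos z (by omega)
    have hcz : (c : ℤ) = z % (n : ℤ) := by omega
    have hclt : c < n := by omega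
    set r : ℤ := z / (n : ℤ) with hr
    have hzeq : z = r * (n : ℤ) + (c : ℤ) := by
      have hde := Int.mul_ediv_add_emod z (n : ℤ)
      rw [hcz]
      linarith
    have hrS : r ∈ Sc n lam c := by
      show r * (n : ℤ) + (c : ℤ) ∈ Bb n lam
      rw [← hzeq]; exact hz
    have hrA : r ≤ sSup (Sc n lam c) := le_csSup (Sc_bdd n hn1 lam c) hrS
    by_cases hc0 : c = 0
    · rw [hc0] at hrA
      have hkey : r - ((m : ℤ) + 1) ≤ sSup (Sc n lam (n - 1)) := by omega
      have hmem : r - ((m : ℤ) + 1) ∈ Sc n lam (n - 1) :=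
        (Sc_mem_iff n hn1 lam hcl (n - 1) _).mpr hkey
      have h3 : (r - ((m : ℤ) + 1)) * (n : ℤ) + ((n - 1 : ℕ) : ℤ) ∈ Bb n lam := hmem
      have h9 : ((n - 1 : ℕ) : ℤ) = (n : ℤ) - 1 := by omega
      have he : (r - ((m : ℤ) + 1)) * (n : ℤ) + ((n - 1 : ℕ) : ℤ) =
          z - ((m : ℤ) * n + 1) := by
        rw [h9, hzeq, hc0]; push_cast; ring
      rwa [he] at h3
    · have hc1 : 1 ≤ c := by omega
      have hkey : r - (m : ℤ) ≤ sSup (Sc n lam (c - 1)) := by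
        have := h1 c hc1 (by omega)
        omega
      have hmem : r - (m : ℤ) ∈ Sc n lam (c - 1) :=
        (Sc_mem_iff n hn1 lam hcl (c - 1) _).mpr hkey
      have h3 : (r - (m : ℤ)) * (n : ℤ) + ((c - 1 : ℕ) : ℤ) ∈ Bb n lam := hmem
      have h9 : ((c - 1 : ℕ) : ℤ) = (c : ℤ) - 1 := by omega
      have he : (r - (m : ℤ)) * (n : ℤ) + ((c - 1 : ℕ) : ℤ) =
          z - ((m : ℤ) * n + 1) := by
        rw [h9, hzeq]; ring
      rwa [he] at h3

lemma ip_e (n : ℕ) (v : Fin n → ℝ) (a : ℕ) (ha : a < n) :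
    ip n v (e n a) = v ⟨a, ha⟩ := by
  unfold ip e
  rw [Finset.sum_eq_single (⟨a, ha⟩ : Fin n)]
  · simp
  · intro b _ hb
    have hba : (b : ℕ) ≠ a := fun h => hb (Fin.ext h)
    simp [hba]
  · intro h
    exact absurd (Finset.mem_univ _) h

lemma ip_es (n : ℕ) (v : Fin n → ℝ) (a b : ℕ) (ha : a < n) (hb : b < n) :
    ip n v (e n a - e n b) = v ⟨a, ha⟩ - v ⟨b, hb⟩ := by
  have h : ip n v (e n a - e n b) = ip n v (e n a) - ip n v (e n b) := by
    unfold ip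
    rw [← Finset.sum_sub_distrib]
    exact Finset.sum_congr rfl fun j _ => by simp [mul_sub]
  rw [h, ip_e n v a ha, ip_e n v b hb]

lemma nvecR_eq (n : ℕ) (lam : YoungDiagram) (a : ℕ) (ha : a < n) :
    nvecR n lam ⟨a, ha⟩ = ((sSup (Sc n lam a) : ℤ) : ℝ) := rfl

/-- An n-core λ is also an (mn+1)-core iff ⟨n⃗(λ),αᵢ⟩ ≥ −m for
1 ≤ i ≤ n−1 and ⟨n⃗(λ),θ⟩ ≤ m+1. -/
theorem statement9 (n : ℕ) (hn : 2 ≤ n) (m : ℕ) (hm : 1 ≤ m) (lam : YoungDiagram)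
    (hcore : IsCore n lam) :
    IsCore (m * n + 1) lam ↔
      ((∀ i : ℕ, 1 ≤ i → i ≤ n - 1 → -(m : ℝ) ≤ ip n (nvecR n lam) (sroot n i)) ∧
        ip n (nvecR n lam) (theta n) ≤ (m : ℝ) + 1) := by
  have hn1 : 1 ≤ n := by omega
  have hclosedn : ∀ z ∈ Bb n lam, z - (n : ℤ) ∈ Bb n lam := by
    have h := (core_iff_closed n hn1 lam).mp hcore
    exact Bb_closed n lam (n : ℤ) h
  have lhs_iff : IsCore (m * n + 1) lam ↔
      ∀ z ∈ Bb n lam, z - ((m : ℤ) * n + 1) ∈ Bb n lam := by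
    rw [core_iff_closed (m * n + 1) (by omega) lam]
    have hcast : ((m * n + 1 : ℕ) : ℤ) = (m : ℤ) * n + 1 := by push_cast; ring
    constructor
    · intro h z hz
      have h2 := Bb_closed n lam ((m * n + 1 : ℕ) : ℤ) h z hz
      rwa [hcast] at h2
    · intro h z hz
      have h2 := closed_of_Bb n lam ((m : ℤ) * n + 1) h z hz
      rwa [hcast]
  have hip1 : ∀ i : ℕ, 1 ≤ i → i ≤ n - 1 →
      ip n (nvecR n lam) (sroot n i) =
        ((sSup (Sc n lam (i - 1)) : ℤ) : ℝ) - ((sSup (Sc n lam i) : ℤ) : ℝ) := by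
    intro i hi1 hi2
    have hi : i < n := by omega
    have hi1' : i - 1 < n := by omega
    show ip n (nvecR n lam) (e n (i - 1) - e n i) = _
    rw [ip_es n _ (i - 1) i hi1' hi, nvecR_eq n lam (i - 1) hi1', nvecR_eq n lam i hi]
  have hipθ : ip n (nvecR n lam) (theta n) =
      ((sSup (Sc n lam 0) : ℤ) : ℝ) - ((sSup (Sc n lam (n - 1)) : ℤ) : ℝ) := by
    show ip n (nvecR n lam) (e n 0 - e n (n - 1)) = _
    rw [ip_es n _ 0 (n - 1) (by omega) (by omega), nvecR_eq n lam 0 (by omega),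
      nvecR_eq n lam (n - 1) (by omega)]
  rw [lhs_iff, closed_iff_ineq n hn lam hclosedn m]
  constructor
  · rintro ⟨h1, h2⟩
    constructor
    · intro i hi1 hi2
      rw [hip1 i hi1 hi2]
      have hz := h1 i hi1 hi2
      have hz' : ((sSup (Sc n lam i) - (m : ℤ) : ℤ) : ℝ) ≤
          ((sSup (Sc n lam (i - 1)) : ℤ) : ℝ) := by exact_mod_cast hz
      push_cast at hz'
      linarith
    · rw [hipθ]
      have hz' : ((sSup (Sc n lam 0) - ((m : ℤ) + 1) : ℤ) : ℝ) ≤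
          ((sSup (Sc n lam (n - 1)) : ℤ) : ℝ) := by exact_mod_cast h2
      push_cast at hz'
      linarith
  · rintro ⟨h1, h2⟩
    constructor
    · intro c hc1 hc2
      have hz := h1 c hc1 hc2
      rw [hip1 c hc1 hc2] at hz
      have h3 : ((sSup (Sc n lam c) - (m : ℤ) : ℤ) : ℝ) ≤
          ((sSup (Sc n lam (c - 1)) : ℤ) : ℝ) := by push_cast; linarith
      exact_mod_cast h3
    · rw [hipθ] at h2
      have h3 : ((sSup (Sc n lam 0) - ((m : ℤ) + 1) : ℤ) : ℝ) ≤
          ((sSup (Sc n lam (n - 1)) : ℤ) : ℝ) := by push_cast; linarith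
      exact_mod_cast h3

end FV
end
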